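/- For the type A Grassmannian combinatorics: if λ ∈ 𝒫(k,n) corresponds to the binary word γ under the lattice-path bijection, then λ^1 = (λ_2-1, ..., λ_k-1, 0) (negatives replaced by 0) corresponds to the word γ^1 obtained from γ by interchanging the first 1 and the last 0 of γ (when both exist). -/

import Mathlib

/-- The boundary word `D(λ)` of a partition `λ` in the `k × (n-k)` rectangle:
`true` (= 1) for a down step, `false` (= 0) for a left step, read from the top-right corner. -/
def bword (n k : ℕ) (lam : Fin k → ℕ) : Fin n → Bool :=
  fun i => decide (∃ j : Fin k, (i : ℕ) = n - k - lam j + (j : ℕ))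

/-- if `λ ∈ 𝒫(k,n)` corresponds to the word `γ = D(λ)`, and `γ` has a first `1`
(at position `p`) and a last `0` (at position `q`), then `λ¹ = (λ₂-1,…,λ_k-1,0)` corresponds to
the word obtained from `γ` by interchanging the first `1` and the last `0`. -/
theorem stmt_4 (n k : ℕ) (hk : k ≤ n) (lam : Fin k → ℕ)
    (hanti : ∀ i j : Fin k, i ≤ j → lam j ≤ lam i)
    (hbd : ∀ i : Fin k, lam i ≤ n - k)
    (p q : Fin n) (hpq : p < q)
    (hp1 : bword n k lam p = true) (hp0 : ∀ i : Fin n, i < p → bword n k lam i = false)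
    (hq0 : bword n k lam q = false) (hq1 : ∀ i : Fin n, q < i → bword n k lam i = true) :
    bword n k (fun i => if h : (i : ℕ) + 1 < k then lam ⟨(i : ℕ) + 1, h⟩ - 1 else 0) =
      Function.update (Function.update (bword n k lam) p false) q true := by
  simp only [bword, decide_eq_true_eq] at hp1
  obtain ⟨j0, hj0⟩ := hp1
  have hk0 : 0 < k := j0.pos
  have hpq' : (p:ℕ) < (q:ℕ) := hpq
  have hqn : (q:ℕ) < n := q.isLt
  have hq0' : ¬ ∃ j : Fin k, (q:ℕ) = n - k - lam j + j := by
    simpa [bword] using hq0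
  have hq1' : ∀ x : ℕ, x < n → (q:ℕ) < x → ∃ j : Fin k, x = n - k - lam j + j := by
    intro x hx hqx
    have := hq1 ⟨x, hx⟩ (by simpa [Fin.lt_def] using hqx)
    simpa [bword] using this
  have hp0' : ∀ x : ℕ, x < n → x < (p:ℕ) → ¬ ∃ j : Fin k, x = n - k - lam j + j := by
    intro x hx hxp
    have := hp0 ⟨x, hx⟩ (by simpa [Fin.lt_def] using hxp)
    simpa [bword] using this
  have hb0 : lam ⟨0, hk0⟩ ≤ n - k := hbd _
  -- p is the position of the first one, namely n - k - lam 0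
  have hp : (p:ℕ) = n - k - lam ⟨0, hk0⟩ := by
    have hle : n - k - lam ⟨0, hk0⟩ ≤ (p:ℕ) := by
      have h1 := hanti ⟨0, hk0⟩ j0 (by simp [Fin.le_def])
      have h2 := hbd j0
      omega
    rcases Nat.lt_or_ge (n - k - lam ⟨0, hk0⟩) (p:ℕ) with h | h
    · exact absurd ⟨⟨0, hk0⟩, by simp only [Fin.val_mk]; omega⟩ (hp0' _ (by omega) h)
    · omega
  have hlam0 : 1 ≤ lam ⟨0, hk0⟩ := by
    by_contra h
    push_neg at h
    apply hq0'
    refine ⟨⟨(q:ℕ) - (n - k), by omega⟩, ?_⟩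
    have := hanti ⟨0, hk0⟩ ⟨(q:ℕ) - (n - k), by omega⟩ (by simp [Fin.le_def])
    simp only [Fin.val_mk] at *
    omega
  -- the trailing `m+1`-st entry of lam is zero, for all m < n - 1 - q
  have hA : ∀ m : ℕ, m < n - 1 - (q:ℕ) →
      m < k ∧ ∀ j : Fin k, (j:ℕ) = k - 1 - m → lam j = 0 := by
    intro m
    induction m using Nat.strong_induction_on with
    | _ m IH =>
      intro hm
      have hmk : m < k := by
        by_contra h
        push_neg at h
        obtain ⟨-, h2⟩ := IH (m-1) (by omega) (by omega)
        have := h2 ⟨0, hk0⟩ (by simp only [Fin.val_mk]; omega)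
        omega
      obtain ⟨j, hj⟩ := hq1' (n - 1 - m) (by omega) (by omega)
      have hbj : lam j ≤ n - k := hbd j
      have hjk : (j:ℕ) < k := j.isLt
      have hjge : k - 1 - m ≤ (j:ℕ) := by
        by_contra h
        push_neg at h
        have hlt2 : k - 1 - m < k := by omega
        have hmono := hanti j ⟨k - 1 - m, hlt2⟩ (by simp only [Fin.le_def, Fin.val_mk]; omega)
        have hb2 : lam ⟨k - 1 - m, hlt2⟩ ≤ n - k := hbd _
        omega
      have hjeq : (j:ℕ) = k - 1 - m := by
        rcases Nat.eq_or_lt_of_le hjge with h | h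
        · omega
        · have hm1 : 1 ≤ m := by omega
          obtain ⟨-, h2⟩ := IH (m-1) (by omega) (by omega)
          have hlt3 : k - 1 - (m-1) < k := by omega
          have hz0 := h2 ⟨k - 1 - (m-1), hlt3⟩ (by simp only [Fin.val_mk])
          have hmono := hanti ⟨k - 1 - (m-1), hlt3⟩ j
            (by simp only [Fin.le_def, Fin.val_mk]; omega)
          omega
      refine ⟨hmk, fun j' hj' => ?_⟩
      have hjj : j' = j := Fin.ext (by omega)
      subst hjj
      omega
  have hT : n - 1 - (q:ℕ) ≤ k - 1 := by
    by_contra h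
    push_neg at h
    obtain ⟨-, h2⟩ := hA (k-1) (by omega)
    have := h2 ⟨0, hk0⟩ (by simp only [Fin.val_mk]; omega)
    omega
  funext x
  have hxn : (x:ℕ) < n := x.isLt
  rcases eq_or_ne x q with rfl | hxq
  · rw [Function.update_self]
    simp only [bword, decide_eq_true_eq]
    set t := n - 1 - (x:ℕ) with ht
    rcases Nat.eq_zero_or_pos t with h0 | h1
    · refine ⟨⟨k - 1, by omega⟩, ?_⟩
      rw [dif_neg (by simp only [Fin.val_mk]; omega)]
      simp only [Fin.val_mk]
      omega
    · have hlt : k - t < k := by omega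
      obtain ⟨-, h2⟩ := hA (t-1) (by omega)
      refine ⟨⟨k - t - 1, by omega⟩, ?_⟩
      split
      · rename_i hcond
        have hz := h2 ⟨(↑(⟨k - t - 1, by omega⟩ : Fin k) : ℕ) + 1, hcond⟩
          (by simp only [Fin.val_mk]; omega)
        simp only [Fin.val_mk] at hz ⊢
        omega
      · rename_i hcond
        simp only [Fin.val_mk] at hcond
        omega
  · rw [Function.update_of_ne hxq]
    have hxq' : (x:ℕ) ≠ (q:ℕ) := fun hh => hxq (Fin.ext hh)
    rcases eq_or_ne x p with rfl | hxp
    · rw [Function.update_self]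
      simp only [bword, decide_eq_false_iff_not]
      rintro ⟨i, hi⟩
      have hik : (i:ℕ) < k := i.isLt
      split at hi
      · rename_i hcond
        have h1 := hanti ⟨0, hk0⟩ ⟨(i:ℕ)+1, hcond⟩ (by simp [Fin.le_def])
        have h2 := hbd ⟨(i:ℕ)+1, hcond⟩
        omega
      · rename_i hcond
        omega
    · rw [Function.update_of_ne hxp]
      have hxp' : (x:ℕ) ≠ (p:ℕ) := fun hh => hxp (Fin.ext hh)
      simp only [bword]
      rw [decide_eq_decide]
      constructor
      · rintro ⟨i, hi⟩
        have hik : (i:ℕ) < k := i.isLt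
        split at hi
        · rename_i hcond
          rcases Nat.eq_zero_or_pos (lam ⟨(i:ℕ)+1, hcond⟩) with hz | hpos
          · -- x = n - k + i
            have hxv : (x:ℕ) = n - k + (i:ℕ) := by omega
            rcases lt_trichotomy (x:ℕ) (q:ℕ) with hlt | heq | hgt
            · exfalso
              apply hq0'
              refine ⟨⟨(q:ℕ) - (n - k), by omega⟩, ?_⟩
              have hmono := hanti ⟨(i:ℕ)+1, hcond⟩ ⟨(q:ℕ) - (n - k), by omega⟩
                (by simp only [Fin.le_def, Fin.val_mk]; omega)
              simp only [Fin.val_mk] at *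
              omega
            · exact absurd heq hxq'
            · exact hq1' _ hxn hgt
          · refine ⟨⟨(i:ℕ)+1, hcond⟩, ?_⟩
            have h2 := hbd ⟨(i:ℕ)+1, hcond⟩
            simp only [Fin.val_mk] at *
            omega
        · rename_i hcond
          -- x = n - 1
          have hgt : (q:ℕ) < (x:ℕ) := by omega
          exact hq1' _ hxn hgt
      · rintro ⟨j, hj⟩
        have hjk : (j:ℕ) < k := j.isLt
        have hbj : lam j ≤ n - k := hbd j
        have hj1 : 1 ≤ (j:ℕ) := by
          by_contra h
          push_neg at h
          apply hxp'
          have : j = ⟨0, hk0⟩ := Fin.ext (by simp only [Fin.val_mk]; omega)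
          rw [this] at hj
          simp only [Fin.val_mk] at hj
          omega
        rcases Nat.eq_zero_or_pos (lam j) with hz | hpos
        · refine ⟨j, ?_⟩
          split
          · rename_i hcond
            have hmono := hanti j ⟨(j:ℕ)+1, hcond⟩ (by simp [Fin.le_def])
            omega
          · omega
        · refine ⟨⟨(j:ℕ) - 1, by omega⟩, ?_⟩
          split
          · rename_i hcond
            have he : (⟨(↑(⟨(j:ℕ) - 1, by omega⟩ : Fin k) : ℕ) + 1, hcond⟩ : Fin k) = j :=
              Fin.ext (by simp only [Fin.val_mk]; omega)
            rw [he]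
            simp only [Fin.val_mk]
            omega
          · rename_i hcond
            simp only [Fin.val_mk] at hcond
            omega
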